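/- If f : ℝ³ → ℝ³ is C¹ with f'(u)v·v ≥ (-K + κ|u|^{r-1})|v|² for all u,v (K ≥ 0, κ > 0, r ≥ 1), then there exist constants C ≥ 0 and α > 0 such that for all u₁, u₂ ∈ ℝ³: (f(u₁) - f(u₂))·(u₁ - u₂) ≥ -C|u₁ - u₂|² + α(|u₁|^{r-1} + |u₂|^{r-1})|u₁ - u₂|². -/

import Mathlib

open scoped InnerProductSpace

local notation "E" => EuclideanSpace ℝ (Fin 3)

-- integral lower bound via a subinterval
lemma int_lb (g : ℝ → ℝ) (hg : Continuous g) (hg0 : ∀ t, 0 ≤ g t)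
    (c d m : ℝ) (h0 : 0 ≤ c) (hcd : c ≤ d) (hd : d ≤ 1)
    (hm : ∀ t ∈ Set.Icc c d, m ≤ g t) :
    (d - c) * m ≤ ∫ t in (0:ℝ)..1, g t := by
  have hi : ∀ a b : ℝ, IntervalIntegrable g MeasureTheory.volume a b :=
    fun a b => hg.intervalIntegrable a b
  have h1 := intervalIntegral.integral_add_adjacent_intervals (hi 0 c) (hi c d)
  have h2 := intervalIntegral.integral_add_adjacent_intervals (hi 0 d) (hi d 1)
  have n1 : 0 ≤ ∫ t in (0:ℝ)..c, g t :=
    intervalIntegral.integral_nonneg h0 (fun u _ => hg0 u)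
  have n2 : 0 ≤ ∫ t in d..1, g t :=
    intervalIntegral.integral_nonneg hd (fun u _ => hg0 u)
  have hmid : (d - c) * m ≤ ∫ t in c..d, g t := by
    have := intervalIntegral.integral_mono_on hcd
      (intervalIntegrable_const) (hi c d) hm
    simpa [smul_eq_mul] using this
  linarith

set_option maxHeartbeats 1000000
theorem stmt2 (f : E → E) (K κ r : ℝ) (hf : ContDiff ℝ 1 f)
    (hK : 0 ≤ K) (hκ : 0 < κ) (hr : 1 ≤ r)
    (hderiv : ∀ u v : E, ⟪(fderiv ℝ f u) v, v⟫_ℝ ≥ (-K + κ * ‖u‖ ^ (r - 1)) * ‖v‖ ^ 2) :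
    ∃ C ≥ (0 : ℝ), ∃ α > (0 : ℝ), ∀ u₁ u₂ : E,
      ⟪f u₁ - f u₂, u₁ - u₂⟫_ℝ ≥
        -C * ‖u₁ - u₂‖ ^ 2 + α * (‖u₁‖ ^ (r - 1) + ‖u₂‖ ^ (r - 1)) * ‖u₁ - u₂‖ ^ 2 := by
  have hr1 : (0:ℝ) ≤ r - 1 := by linarith
  have h2r : (0:ℝ) < 2 ^ (r - 1) := Real.rpow_pos_of_pos two_pos _
  refine ⟨K, hK, κ / (8 * 2 ^ (r - 1)), by positivity, ?_⟩
  intro u₁ u₂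
  set w : E := u₁ - u₂ with hw
  set γ : ℝ → E := fun t => u₂ + t • w with hγdef
  have hγ0 : γ 0 = u₂ := by simp [hγdef]
  have hγ1 : γ 1 = u₁ := by simp [hγdef, hw]
  have hγd : ∀ t : ℝ, HasDerivAt γ w t := by
    intro t
    have := ((hasDerivAt_id t).smul_const w).const_add u₂
    rw [one_smul] at this
    exact this
  have hγc : Continuous γ := by
    have := (continuous_id.smul continuous_const : Continuous fun t : ℝ => t • w)
    exact continuous_const.add this
  -- derivative of t ↦ ⟪f (γ t), w⟫
  have hd : ∀ t : ℝ, HasDerivAt (fun s => ⟪f (γ s), w⟫_ℝ)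
      ⟪(fderiv ℝ f (γ t)) w, w⟫_ℝ t := by
    intro t
    have h1 : HasDerivAt (fun s => f (γ s)) ((fderiv ℝ f (γ t)) w) t :=
      ((hf.differentiable one_ne_zero (γ t)).hasFDerivAt).comp_hasDerivAt t (hγd t)
    simpa using h1.inner ℝ (hasDerivAt_const t w)
  -- continuity of the derivative
  have hcont : Continuous fun t => ⟪(fderiv ℝ f (γ t)) w, w⟫_ℝ := by
    have h1 : Continuous fun t => (fderiv ℝ f (γ t)) w :=
      ((hf.continuous_fderiv one_ne_zero).comp hγc).clm_apply continuous_const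
    exact h1.inner continuous_const
  have key : ∫ t in (0:ℝ)..1, ⟪(fderiv ℝ f (γ t)) w, w⟫_ℝ
      = ⟪f u₁ - f u₂, w⟫_ℝ := by
    rw [intervalIntegral.integral_eq_sub_of_hasDerivAt (fun t _ => hd t)
      (hcont.intervalIntegrable 0 1), hγ0, hγ1, inner_sub_left]
  -- the norm-power function along γ
  set g : ℝ → ℝ := fun t => ‖γ t‖ ^ (r - 1) with hgdef
  have hgc : Continuous g := (hγc.norm).rpow_const (fun x => Or.inr hr1)
  have hg0 : ∀ t, 0 ≤ g t := fun t => Real.rpow_nonneg (norm_nonneg _) _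
  set S : ℝ := ‖u₁‖ ^ (r - 1) + ‖u₂‖ ^ (r - 1) with hS
  -- key integral estimate
  have hI : S / (8 * 2 ^ (r - 1)) ≤ ∫ t in (0:ℝ)..1, g t := by
    have hγeq : ∀ t : ℝ, γ t = (1 - t) • u₂ + t • u₁ := by
      intro t; simp [hγdef, hw, smul_sub, sub_smul]; abel
    rcases le_total ‖u₂‖ ‖u₁‖ with hab | hab
    · -- use [3/4, 1]
      have hb : S ≤ 2 * ‖u₁‖ ^ (r - 1) := by
        have := Real.rpow_le_rpow (norm_nonneg u₂) hab hr1
        rw [hS]; linarith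
      have := int_lb g hgc hg0 (3/4) 1 (S / (2 * 2 ^ (r - 1)))
        (by norm_num) (by norm_num) le_rfl ?_
      · calc S / (8 * 2 ^ (r - 1)) = (1 - 3/4) * (S / (2 * 2 ^ (r - 1))) := by
              ring
          _ ≤ _ := this
      · intro t ht
        obtain ⟨ht1, ht2⟩ := ht
        have hnorm : ‖u₁‖ / 2 ≤ ‖γ t‖ := by
          have h3 : ‖t • u₁‖ - ‖-((1 - t) • u₂)‖ ≤ ‖t • u₁ - -((1 - t) • u₂)‖ :=
            norm_sub_norm_le _ _
          have h4 : t • u₁ - -((1 - t) • u₂) = γ t := by rw [hγeq t]; abel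
          rw [h4, norm_neg, norm_smul, norm_smul] at h3
          have ha := norm_nonneg u₂
          have hb' := norm_nonneg u₁
          have e1 : ‖(t:ℝ)‖ = t := by rw [Real.norm_eq_abs, abs_of_nonneg (by linarith)]
          have e2 : ‖(1 - t : ℝ)‖ = 1 - t := by
            rw [Real.norm_eq_abs, abs_of_nonneg (by linarith)]
          rw [e1, e2] at h3
          nlinarith
        have h5 : (‖u₁‖ / 2) ^ (r - 1) ≤ g t :=
          Real.rpow_le_rpow (by positivity) hnorm hr1
        have h6 : (‖u₁‖ / 2) ^ (r - 1) = ‖u₁‖ ^ (r - 1) / 2 ^ (r - 1) :=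
          Real.div_rpow (norm_nonneg _) (by norm_num) _
        rw [h6] at h5
        calc S / (2 * 2 ^ (r - 1)) ≤ 2 * ‖u₁‖ ^ (r - 1) / (2 * 2 ^ (r - 1)) := by
              apply div_le_div_of_nonneg_right ?_ (by positivity)
              · exact hb
          _ = ‖u₁‖ ^ (r - 1) / 2 ^ (r - 1) := by
              rw [mul_div_mul_left _ _ (two_ne_zero)]
          _ ≤ g t := h5
    · -- use [0, 1/4]
      have hb : S ≤ 2 * ‖u₂‖ ^ (r - 1) := by
        have := Real.rpow_le_rpow (norm_nonneg u₁) hab hr1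
        rw [hS]; linarith
      have := int_lb g hgc hg0 0 (1/4) (S / (2 * 2 ^ (r - 1)))
        le_rfl (by norm_num) (by norm_num) ?_
      · calc S / (8 * 2 ^ (r - 1)) = (1/4 - 0) * (S / (2 * 2 ^ (r - 1))) := by
              ring
          _ ≤ _ := this
      · intro t ht
        obtain ⟨ht1, ht2⟩ := ht
        have hnorm : ‖u₂‖ / 2 ≤ ‖γ t‖ := by
          have h3 : ‖(1 - t) • u₂‖ - ‖-(t • u₁)‖ ≤ ‖(1 - t) • u₂ - -(t • u₁)‖ :=
            norm_sub_norm_le _ _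
          have h4 : (1 - t) • u₂ - -(t • u₁) = γ t := by rw [hγeq t]; abel
          rw [h4, norm_neg, norm_smul, norm_smul] at h3
          have ha := norm_nonneg u₂
          have hb' := norm_nonneg u₁
          have e1 : ‖(t:ℝ)‖ = t := by rw [Real.norm_eq_abs, abs_of_nonneg (by linarith)]
          have e2 : ‖(1 - t : ℝ)‖ = 1 - t := by
            rw [Real.norm_eq_abs, abs_of_nonneg (by linarith)]
          rw [e1, e2] at h3
          nlinarith
        have h5 : (‖u₂‖ / 2) ^ (r - 1) ≤ g t :=
          Real.rpow_le_rpow (by positivity) hnorm hr1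
        have h6 : (‖u₂‖ / 2) ^ (r - 1) = ‖u₂‖ ^ (r - 1) / 2 ^ (r - 1) :=
          Real.div_rpow (norm_nonneg _) (by norm_num) _
        rw [h6] at h5
        calc S / (2 * 2 ^ (r - 1)) ≤ 2 * ‖u₂‖ ^ (r - 1) / (2 * 2 ^ (r - 1)) := by
              apply div_le_div_of_nonneg_right ?_ (by positivity)
              · exact hb
          _ = ‖u₂‖ ^ (r - 1) / 2 ^ (r - 1) := by
              rw [mul_div_mul_left _ _ (two_ne_zero)]
          _ ≤ g t := h5
  -- pointwise lower bound on the derivative and integration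
  set c : ℝ := ‖w‖ ^ 2 with hc
  have hlow : ∀ t ∈ Set.Icc (0:ℝ) 1,
      -K * c + κ * c * g t ≤ ⟪(fderiv ℝ f (γ t)) w, w⟫_ℝ := by
    intro t _
    have := hderiv (γ t) w
    calc -K * c + κ * c * g t = (-K + κ * ‖γ t‖ ^ (r - 1)) * ‖w‖ ^ 2 := by
          rw [hgdef, hc]; ring
      _ ≤ _ := this
  have hlowi : IntervalIntegrable (fun t => -K * c + κ * c * g t)
      MeasureTheory.volume 0 1 :=
    (Continuous.add continuous_const (continuous_const.mul hgc)).intervalIntegrable 0 1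
  have hmono := intervalIntegral.integral_mono_on (by norm_num : (0:ℝ) ≤ 1)
    hlowi (hcont.intervalIntegrable 0 1) hlow
  have hsplit : ∫ t in (0:ℝ)..1, (-K * c + κ * c * g t)
      = -K * c + κ * c * ∫ t in (0:ℝ)..1, g t := by
    rw [intervalIntegral.integral_add (intervalIntegrable_const)
      (show IntervalIntegrable (fun t => κ * c * g t) MeasureTheory.volume 0 1 from
        (continuous_const.mul hgc).intervalIntegrable 0 1),
      intervalIntegral.integral_const_mul, intervalIntegral.integral_const]
    simp
  rw [hsplit] at hmono
  rw [key] at hmono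
  -- conclude
  have hfin : -K * c + κ * c * (S / (8 * 2 ^ (r - 1))) ≤ ⟪f u₁ - f u₂, w⟫_ℝ := by
    have h7 : κ * c * (S / (8 * 2 ^ (r - 1))) ≤ κ * c * ∫ t in (0:ℝ)..1, g t :=
      mul_le_mul_of_nonneg_left hI (by positivity)
    linarith
  have heq : -K * ‖w‖ ^ 2 + κ / (8 * 2 ^ (r - 1)) * S * ‖w‖ ^ 2
      = -K * c + κ * c * (S / (8 * 2 ^ (r - 1))) := by
    rw [hc]; ring
  calc -K * ‖u₁ - u₂‖ ^ 2 + κ / (8 * 2 ^ (r - 1)) * S * ‖u₁ - u₂‖ ^ 2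
      = -K * c + κ * c * (S / (8 * 2 ^ (r - 1))) := by rw [← hw]; exact heq
    _ ≤ _ := hfin
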